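/- Let x, z : ℝ → ℝ be differentiable with x > 0 satisfying x' = -xze^{-mt}, z' = c - x + (m-1)z. Define Q(t) = log x(t) - t and P(t) = z(t)e^{-(m-1)t}. Then Q' = ∂H̃/∂P = -1 - Pe^{-t} and P' = -∂H̃/∂Q = -e^{Q-(m-2)t} + ce^{-(m-1)t}, where H̃(Q,P,t) = e^{Q-(m-2)t} - P - c(Q+t)e^{-(m-1)t} - (P²/2)e^{-t}. -/

import Mathlib

open Real

theorem virotherapy_hamiltons_equations (m c : ℝ) (x z : ℝ → ℝ)
    (hxpos : ∀ t, 0 < x t)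
    (hx : ∀ t, HasDerivAt x (-(x t * z t * Real.exp (-(m * t)))) t)
    (hz : ∀ t, HasDerivAt z (c - x t + (m - 1) * z t) t) :
    ∀ t, HasDerivAt (fun s => Real.log (x s) - s)
        (-1 - (z t * Real.exp (-(m - 1) * t)) * Real.exp (-t)) t ∧
      HasDerivAt (fun s => z s * Real.exp (-(m - 1) * s))
        (-Real.exp ((Real.log (x t) - t) - (m - 2) * t) + c * Real.exp (-(m - 1) * t)) t := by
  intro t
  constructor
  · have h1 : HasDerivAt (fun s => Real.log (x s) - s)
        (-(x t * z t * Real.exp (-(m * t))) / x t - 1) t :=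
      ((hx t).log (hxpos t).ne').sub (hasDerivAt_id t)
    convert h1 using 1
    have e1 : Real.exp ((1 - m) * t) * Real.exp (-t) = Real.exp (-(m * t)) := by
      rw [← Real.exp_add]; ring_nf
    field_simp [(hxpos t).ne']
    rw [show -((m - 1) * t) = (1 - m) * t by ring]
    linear_combination (-(z t)) * e1
  · have he : HasDerivAt (fun s => Real.exp (-(m - 1) * s))
        (Real.exp (-(m - 1) * t) * -(m - 1)) t := by
      simpa using ((hasDerivAt_id t).const_mul (-(m - 1))).exp
    have h2 := (hz t).mul he
    refine h2.congr_deriv ?_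
    symm
    rw [Real.exp_sub, Real.exp_sub, Real.exp_log (hxpos t)]
    have k : Real.exp ((1 - m) * t) * Real.exp (t + (m - 2) * t) = 1 := by
      have h0 : (1 - m) * t + (t + (m - 2) * t) = 0 := by ring
      rw [← Real.exp_add, h0, Real.exp_zero]
    field_simp
    rw [show -(t * (m - 1)) = (1 - m) * t by ring]
    linear_combination (x t) * k - x t * Real.exp ((1 - m) * t) * Real.exp_add t ((m - 2) * t)
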